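/- arXiv:1907.12313 — 3 statements merged into one kernel-verified Lean document; each statement's English description precedes it below -/
import Mathlib

section
/- Let k ≥ 2, set n = 2k, and let λ = (λ₁,…,λ_n) ∈ Γ_k^+. Then for every index i ∈ {1,…,n}, σ_{k−1}(λ|i) · ((n−2)λ_i + σ_1(λ)) ≥ (n−1) σ_k(λ). -/
/-- The k-th elementary symmetric polynomial of `λ = (λ₁,…,λ_n)` (with `σ_0 = 1`). -/
def esym (n : ℕ) (k : ℕ) (lam : Fin n → ℝ) : ℝ :=
  ∑ s ∈ Finset.powersetCard k (Finset.univ : Finset (Fin n)), ∏ i ∈ s, lam i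

set_option linter.unusedSectionVars false
set_option linter.unusedVariables false
set_option linter.unreachableTactic false
set_option linter.unusedTactic false
set_option linter.deprecated false


open Polynomial Finset

variable {ι : Type*} [DecidableEq ι]

noncomputable def esymF (s : Finset ι) (f : ι → ℝ) (r : ℕ) : ℝ :=
  ∑ t ∈ s.powersetCard r, ∏ i ∈ t, f i

lemma esymF_coeff (s : Finset ι) (f : ι → ℝ) {r : ℕ} (h : r ≤ s.card) :
    (∏ i ∈ s, (X + C (f i))).coeff (s.card - r) = esymF s f r := by
  rw [Finset.prod_X_add_C_coeff s f (Nat.sub_le _ _)]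
  have : s.card - (s.card - r) = r := by omega
  rw [this]; rfl

lemma esymF_top (s : Finset ι) (f : ι → ℝ) : esymF s f s.card = ∏ i ∈ s, f i := by
  rw [esymF, powersetCard_self, sum_singleton]

lemma sum_esymF_erase (s : Finset ι) (f : ι → ℝ) (r : ℕ) :
    ∑ j ∈ s, esymF (s.erase j) f r = ((s.card - r : ℕ) : ℝ) * esymF s f r := by
  unfold esymF
  rw [Finset.sum_comm' (t' := s.powersetCard r) (s' := fun t => s \ t)
    (f := fun _ t => ∏ i ∈ t, f i)]
  · rw [Finset.mul_sum]
    refine Finset.sum_congr rfl fun t ht => ?_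
    rw [Finset.sum_const, nsmul_eq_mul]
    congr 2
    rw [mem_powersetCard] at ht
    rw [card_sdiff_of_subset ht.1, ht.2]
  · intro j t
    simp only [mem_powersetCard, mem_sdiff, Finset.subset_erase]
    tauto

lemma topNewtonF (s : Finset ι) (f : ι → ℝ) (h2 : 2 ≤ s.card) :
    2 * (s.card : ℝ) * (esymF s f (s.card - 2) * ∏ i ∈ s, f i) ≤
      ((s.card : ℝ) - 1) * esymF s f (s.card - 1) ^ 2 := by
  set m := s.card with hm
  set q : ι → ℝ := fun i => ∏ j ∈ s.erase i, f j with hq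
  -- (a)
  have ha : esymF s f (m - 1) = ∑ i ∈ s, q i := by
    have : ∀ i ∈ s, q i = esymF (s.erase i) f (m - 1) := by
      intro i hi
      show (∏ j ∈ s.erase i, f j) = _
      rw [← esymF_top (s.erase i) f, card_erase_of_mem hi]
    rw [Finset.sum_congr rfl this, sum_esymF_erase]
    have : m - (m - 1) = 1 := by omega
    rw [this]; simp
  -- (b)
  have hb : ∑ i ∈ s, ∑ j ∈ s.erase i, ∏ l ∈ (s.erase i).erase j, f l
      = 2 * esymF s f (m - 2) := by
    have hinner : ∀ i ∈ s, ∑ j ∈ s.erase i, ∏ l ∈ (s.erase i).erase j, f l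
        = esymF (s.erase i) f (m - 2) := by
      intro i hi
      have : ∀ j ∈ s.erase i, ∏ l ∈ (s.erase i).erase j, f l
          = esymF ((s.erase i).erase j) f (m - 2) := by
        intro j hj
        rw [← esymF_top ((s.erase i).erase j) f, card_erase_of_mem hj,
          card_erase_of_mem hi]
        congr 1
      rw [Finset.sum_congr rfl this, sum_esymF_erase, card_erase_of_mem hi]
      have : m - 1 - (m - 2) = 1 := by omega
      rw [this]; simp
    rw [Finset.sum_congr rfl hinner, sum_esymF_erase]
    have : m - (m - 2) = 2 := by omega
    rw [this]; norm_num
  -- (c)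
  have hc : ∀ i ∈ s, ∀ j ∈ s.erase i,
      q i * q j = (∏ l ∈ s, f l) * ∏ l ∈ (s.erase i).erase j, f l := by
    intro i hi j hj
    have hji : j ∈ s.erase i := hj
    have hij : i ∈ s.erase j := by
      rw [Finset.mem_erase] at hj ⊢
      exact ⟨fun h => hj.1 h.symm, hi⟩
    have h1 : q i = f j * ∏ l ∈ (s.erase i).erase j, f l :=
      (Finset.mul_prod_erase _ f hji).symm
    have h2 : q j = f i * ∏ l ∈ (s.erase j).erase i, f l :=
      (Finset.mul_prod_erase _ f hij).symm
    have h3 : (s.erase j).erase i = (s.erase i).erase j := Finset.erase_right_comm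
    have h4 : (∏ l ∈ s, f l) = f i * (f j * ∏ l ∈ (s.erase i).erase j, f l) := by
      rw [← h1, hq, Finset.mul_prod_erase _ f hi]
    rw [h1, h2, h3, h4]; ring
  -- expand square
  have hsq : esymF s f (m - 1) ^ 2
      = (∑ i ∈ s, q i ^ 2) + (∏ l ∈ s, f l) * (2 * esymF s f (m - 2)) := by
    rw [ha, sq, Finset.sum_mul_sum]
    have : ∀ i ∈ s, ∑ j ∈ s, q i * q j
        = q i ^ 2 + (∏ l ∈ s, f l) * ∑ j ∈ s.erase i, ∏ l ∈ (s.erase i).erase j, f l := by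
      intro i hi
      rw [← Finset.add_sum_erase s (fun j => q i * q j) hi, sq, ← Finset.mul_sum]
      congr 1
      rw [Finset.mul_sum, Finset.mul_sum]
      exact Finset.sum_congr rfl fun j hj => hc i hi j hj
    rw [Finset.sum_congr rfl this, Finset.sum_add_distrib, ← Finset.mul_sum, hb]
  -- Cauchy-Schwarz
  have hcs : (∑ i ∈ s, q i) ^ 2 ≤ (m : ℝ) * ∑ i ∈ s, q i ^ 2 := by
    exact_mod_cast sq_sum_le_card_mul_sum_sq (s := s) (f := q)
  rw [← ha] at hcs
  have hm1 : (1 : ℝ) ≤ (m : ℝ) := by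
    have : 1 ≤ m := by omega
    exact_mod_cast this
  nlinarith [hsq, hcs]

lemma monic_prodP (s : Finset ι) (f : ι → ℝ) : (∏ i ∈ s, (X + C (f i))).Monic :=
  monic_prod_of_monic _ _ fun i _ => monic_X_add_C (f i)

lemma natDegree_prodP (s : Finset ι) (f : ι → ℝ) :
    (∏ i ∈ s, (X + C (f i))).natDegree = s.card := by
  rw [Polynomial.natDegree_prod _ _ fun i _ => (monic_X_add_C (f i)).ne_zero]
  simp [natDegree_X_add_C]

lemma roots_card_prodP (s : Finset ι) (f : ι → ℝ) :
    Multiset.card (∏ i ∈ s, (X + C (f i))).roots = s.card := by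
  have heq : (∏ i ∈ s, (X + C (f i))) = ∏ i ∈ s, (X - C (-(f i))) := by
    simp [sub_neg_eq_add]
  rw [heq, Polynomial.roots_prod _ _ (by
    rw [← heq]; exact (monic_prodP s f).ne_zero)]
  have hr : ∀ x : ι, (X + C (f x)).roots = {-f x} := fun x => by
    rw [show (X : ℝ[X]) + C (f x) = X - C (-(f x)) by simp [sub_neg_eq_add], roots_X_sub_C]
  simp [hr]

lemma le_card_roots_iterate (p : ℝ[X]) (d : ℕ) :
    Multiset.card p.roots ≤ Multiset.card (derivative^[d] p).roots + d := by
  induction d with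
  | zero => simp
  | succ d ih =>
    refine ih.trans ?_
    rw [Function.iterate_succ_apply']
    have := Polynomial.card_roots_le_derivative (derivative^[d] p)
    omega

set_option maxHeartbeats 1000000 in
lemma newtonF (s : Finset ι) (f : ι → ℝ) (j : ℕ) (hj : 1 ≤ j) (hjs : j + 1 ≤ s.card) :
    ((j : ℝ) + 1) * (((s.card : ℝ) - j) + 1) * (esymF s f (j - 1) * esymF s f (j + 1)) ≤
      (j : ℝ) * ((s.card : ℝ) - j) * esymF s f j ^ 2 := by
  classical
  set m := s.card with hm
  obtain ⟨d, hd⟩ : ∃ d, m = j + 1 + d := ⟨m - j - 1, by omega⟩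
  set P := ∏ i ∈ s, (X + C (f i)) with hP
  set Q := derivative^[d] P with hQdef
  have hPdeg : P.natDegree = m := natDegree_prodP s f
  have hPmonic : P.Monic := monic_prodP s f
  have hQcoeff : ∀ t : ℕ, Q.coeff t = ((t + d).descFactorial d : ℝ) * P.coeff (t + d) := by
    intro t; rw [hQdef, Polynomial.coeff_iterate_derivative, nsmul_eq_mul]
  have hPcoeff : ∀ r : ℕ, r ≤ m → P.coeff (m - r) = esymF s f r := fun r hr =>
    esymF_coeff s f hr
  have hc0 : Q.coeff 0 = (d.factorial : ℝ) * esymF s f (j + 1) := by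
    have e2 : P.coeff (0 + d) = esymF s f (j + 1) := by
      rw [show 0 + d = m - (j + 1) by omega, hPcoeff (j + 1) (by omega)]
    rw [hQcoeff 0, e2, Nat.zero_add, Nat.descFactorial_self]
  have hc1 : Q.coeff 1 = ((1 + d).descFactorial d : ℝ) * esymF s f j := by
    have e2 : P.coeff (1 + d) = esymF s f j := by
      rw [show 1 + d = m - j by omega, hPcoeff j (by omega)]
    rw [hQcoeff 1, e2]
  have hc2 : Q.coeff 2 = ((2 + d).descFactorial d : ℝ) * esymF s f (j - 1) := by
    have e2 : P.coeff (2 + d) = esymF s f (j - 1) := by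
      rw [show 2 + d = m - (j - 1) by omega, hPcoeff (j - 1) (by omega)]
    rw [hQcoeff 2, e2]
  have hctop : Q.coeff (j + 1) = (m.descFactorial d : ℝ) := by
    have e2 : P.coeff (j + 1 + d) = 1 := by
      rw [show j + 1 + d = m from hd.symm, ← hPdeg]
      exact hPmonic.coeff_natDegree
    rw [hQcoeff (j + 1), e2, mul_one, show j + 1 + d = m from hd.symm]
  have hdfpos : 0 < m.descFactorial d :=
    Nat.pos_of_ne_zero (by
      intro h
      rw [Nat.descFactorial_eq_zero_iff_lt] at h
      omega)
  have hQtopne : Q.coeff (j + 1) ≠ 0 := by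
    rw [hctop]
    exact Nat.cast_ne_zero.mpr hdfpos.ne'
  have hQdeg : Q.natDegree = j + 1 := by
    refine le_antisymm ?_ (le_natDegree_of_ne_zero hQtopne)
    have h5 := Polynomial.natDegree_iterate_derivative P d
    rw [← hQdef, hPdeg] at h5
    omega
  have hQroots : Multiset.card Q.roots = j + 1 := by
    have h1 := le_card_roots_iterate P d
    rw [← hQdef, roots_card_prodP, ← hm] at h1
    have h2 := Q.card_roots'
    rw [hQdeg] at h2
    omega
  have hfact := Polynomial.C_leadingCoeff_mul_prod_multiset_X_sub_C (p := Q)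
    (by rw [hQroots, hQdeg])
  set c := Q.leadingCoeff with hcdef
  have hcval : c = (m.descFactorial d : ℝ) := by
    rw [hcdef, Polynomial.leadingCoeff, hQdeg, hctop]
  set l := Q.roots.toList with hl
  have hll : l.length = j + 1 := by rw [hl, Multiset.length_toList, hQroots]
  set b : Fin l.length → ℝ := fun t => -(l.get t) with hb
  have hprod : (Q.roots.map fun a => X - C a).prod = ∏ t : Fin l.length, (X + C (b t)) := by
    conv_lhs => rw [← Multiset.coe_toList Q.roots]
    rw [← hl, Multiset.map_coe, Multiset.prod_coe]
    have hmap : l.map (fun a => X - C a) = List.ofFn (fun t => (X : ℝ[X]) - C (l.get t)) := by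
      conv_lhs => rw [← List.ofFn_get l, List.map_ofFn]
      rfl
    rw [hmap, List.prod_ofFn]
    refine Finset.prod_congr rfl fun t _ => ?_
    rw [hb]
    simp [sub_eq_add_neg]
  have hQfac : Q = C c * ∏ t : Fin l.length, (X + C (b t)) := by rw [← hfact, hprod]
  have hcard : (Finset.univ : Finset (Fin l.length)).card = j + 1 := by simp [hll]
  have hcoe : ∀ r : ℕ, r ≤ j + 1 → Q.coeff (j + 1 - r) = c * esymF Finset.univ b r := by
    intro r hr
    rw [hQfac, Polynomial.coeff_C_mul]
    congr 1
    have h := esymF_coeff (Finset.univ : Finset (Fin l.length)) b (r := r)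
      (by rw [hcard]; exact hr)
    rw [hcard] at h
    exact h
  have hb0 : c * esymF Finset.univ b (j + 1) = Q.coeff 0 := by
    have h := hcoe (j + 1) le_rfl
    rw [Nat.sub_self] at h
    exact h.symm
  have hb1 : c * esymF Finset.univ b j = Q.coeff 1 := by
    have h := hcoe j (by omega)
    rw [show j + 1 - j = 1 by omega] at h
    exact h.symm
  have hb2 : c * esymF Finset.univ b (j - 1) = Q.coeff 2 := by
    have h := hcoe (j - 1) (by omega)
    rw [show j + 1 - (j - 1) = 2 by omega] at h
    exact h.symm
  have htop := topNewtonF (Finset.univ : Finset (Fin l.length)) b (by rw [hcard]; omega)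
  rw [hcard] at htop
  rw [show j + 1 - 2 = j - 1 by omega, show j + 1 - 1 = j by omega] at htop
  have hprodb : (∏ i : Fin l.length, b i) = esymF Finset.univ b (j + 1) := by
    rw [← esymF_top Finset.univ b, hcard]
  rw [hprodb] at htop
  push_cast at htop
  have hkey : 2 * ((j : ℝ) + 1) * (Q.coeff 2 * Q.coeff 0) ≤ (j : ℝ) * Q.coeff 1 ^ 2 := by
    rw [← hb0, ← hb1, ← hb2]
    nlinarith [htop, sq_nonneg c, mul_le_mul_of_nonneg_left htop (sq_nonneg c)]
  rw [hc0, hc1, hc2] at hkey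
  have hf1 : ((1 + d).descFactorial d : ℝ) = ((d : ℝ) + 1) * (d.factorial : ℝ) := by
    have h := Nat.factorial_mul_descFactorial (show d ≤ 1 + d by omega)
    rw [show 1 + d - d = 1 by omega, Nat.factorial_one, one_mul] at h
    rw [h, show 1 + d = d + 1 by omega, Nat.factorial_succ]
    push_cast
    ring
  have hf2 : (2 : ℝ) * ((2 + d).descFactorial d : ℝ)
      = ((d : ℝ) + 2) * (((d : ℝ) + 1) * (d.factorial : ℝ)) := by
    have h := Nat.factorial_mul_descFactorial (show d ≤ 2 + d by omega)
    rw [show 2 + d - d = 2 by omega] at h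
    have h2 : ((2).factorial * (2 + d).descFactorial d : ℕ) = ((2 + d).factorial : ℕ) := h
    have h3 : ((2 + d).factorial : ℝ) = ((d : ℝ) + 2) * (((d : ℝ) + 1) * (d.factorial : ℝ)) := by
      rw [show 2 + d = d + 1 + 1 by omega, Nat.factorial_succ, Nat.factorial_succ]
      push_cast
      ring
    calc (2 : ℝ) * ((2 + d).descFactorial d : ℝ)
        = (((2).factorial * (2 + d).descFactorial d : ℕ) : ℝ) := by
          rw [Nat.cast_mul]; norm_num [Nat.factorial]
      _ = ((2 + d).factorial : ℝ) := by rw [h2]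
      _ = _ := h3
  have hgoal : ((m : ℝ) - j) = (d : ℝ) + 1 := by
    rw [hd]; push_cast; ring
  rw [hgoal]
  set F := (d.factorial : ℝ) with hF
  have hFpos : 0 < F := by rw [hF]; exact_mod_cast d.factorial_pos
  have hK : (0 : ℝ) < ((d : ℝ) + 1) * (F * F) := by positivity
  refine le_of_mul_le_mul_left ?_ hK
  calc ((d : ℝ) + 1) * (F * F) * (((j : ℝ) + 1) * ((d : ℝ) + 1 + 1) * (esymF s f (j - 1) * esymF s f (j + 1)))
      = 2 * ((j : ℝ) + 1) * ((((2 + d).descFactorial d : ℝ)) * esymF s f (j - 1) * (F * esymF s f (j + 1))) := by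
        linear_combination (-(((j : ℝ) + 1) * esymF s f (j - 1) * esymF s f (j + 1) * F)) * hf2
    _ ≤ (j : ℝ) * (((1 + d).descFactorial d : ℝ) * esymF s f j) ^ 2 := hkey
    _ = ((d : ℝ) + 1) * (F * F) * ((j : ℝ) * ((d : ℝ) + 1) * esymF s f j ^ 2) := by
        linear_combination ((j : ℝ) * esymF s f j ^ 2 *
          (((1 + d).descFactorial d : ℝ) + ((d : ℝ) + 1) * F)) * hf1

lemma esymF_zero (s : Finset ι) (f : ι → ℝ) : esymF s f 0 = 1 := by
  simp [esymF]

lemma esymF_erase_rec (s : Finset ι) (f : ι → ℝ) {i : ι} (hi : i ∈ s) (r : ℕ) :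
    esymF s f (r + 1) = esymF (s.erase i) f (r + 1) + f i * esymF (s.erase i) f r := by
  have hins : s = insert i (s.erase i) := (Finset.insert_erase hi).symm
  have hnm : i ∉ s.erase i := Finset.notMem_erase i s
  conv_lhs => rw [esymF, hins, Finset.powersetCard_succ_insert hnm]
  have hdisj : Disjoint (Finset.powersetCard (r + 1) (s.erase i))
      ((Finset.powersetCard r (s.erase i)).image (insert i)) := by
    rw [Finset.disjoint_right]
    intro t ht ht'
    rw [Finset.mem_image] at ht
    obtain ⟨u, hu, rfl⟩ := ht
    rw [Finset.mem_powersetCard] at ht' hu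
    exact hnm (ht'.1 (Finset.mem_insert_self i u))
  rw [Finset.sum_union hdisj]
  congr 1
  rw [Finset.sum_image (fun u hu v hv huv => by
    rw [Finset.mem_coe, Finset.mem_powersetCard] at hu hv
    have hiu : i ∉ u := fun h => hnm (hu.1 h)
    have hiv : i ∉ v := fun h => hnm (hv.1 h)
    have h2 := congrArg (fun t => Finset.erase t i) huv
    simpa [Finset.erase_insert hiu, Finset.erase_insert hiv] using h2)]
  rw [esymF, Finset.mul_sum]
  refine Finset.sum_congr rfl fun t ht => ?_
  rw [Finset.mem_powersetCard] at ht
  rw [Finset.prod_insert (fun h => hnm (ht.1 h))]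

lemma esymF_smul (s : Finset ι) (f : ι → ℝ) (c : ℝ) (r : ℕ) :
    esymF s (fun p => c * f p) r = c ^ r * esymF s f r := by
  unfold esymF
  rw [Finset.mul_sum]
  refine Finset.sum_congr rfl fun t ht => ?_
  rw [Finset.mem_powersetCard] at ht
  rw [Finset.prod_mul_distrib, Finset.prod_const, ht.2]

lemma esym_shift_pos (n : ℕ) (lam : Fin n → ℝ) (j : ℕ) (hjn : j ≤ n)
    (hpos : ∀ r : ℕ, 1 ≤ r → r ≤ j → 0 < esymF (Finset.univ : Finset (Fin n)) lam r)
    {u : ℝ} (hu : 0 ≤ u) :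
    0 < esymF (Finset.univ : Finset (Fin n)) (fun i => lam i + u) j := by
  classical
  rcases Nat.eq_zero_or_pos j with rfl | hj1
  · rw [esymF_zero]; norm_num
  have hcard : (Finset.univ : Finset (Fin n)).card = n := by simp
  set P := ∏ i : Fin n, (X + C (lam i)) with hP
  have hPdeg : P.natDegree = n := by rw [hP, natDegree_prodP, hcard]
  have htay : (∏ i : Fin n, (X + C (lam i + u))) = Polynomial.taylor u P := by
    rw [Polynomial.taylor_apply, hP, Polynomial.prod_comp]
    refine Finset.prod_congr rfl fun i _ => ?_
    rw [Polynomial.add_comp, Polynomial.X_comp, Polynomial.C_comp, map_add, add_assoc,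
      add_comm (C u)]
  have hesym : esymF (Finset.univ : Finset (Fin n)) (fun i => lam i + u) j
      = (Polynomial.hasseDeriv (n - j) P).eval u := by
    rw [← Polynomial.taylor_coeff, ← htay]
    have h := esymF_coeff (Finset.univ : Finset (Fin n)) (fun i => lam i + u) (r := j)
      (by rw [hcard]; exact hjn)
    rw [hcard] at h
    exact h.symm
  rw [hesym]
  have hdeg2 : (Polynomial.hasseDeriv (n - j) P).natDegree < j + 1 := by
    have := Polynomial.natDegree_hasseDeriv_le P (n - j)
    rw [hPdeg] at this
    omega
  rw [Polynomial.eval_eq_sum_range' hdeg2]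
  have hcoeff : ∀ t : ℕ, t ≤ j → (Polynomial.hasseDeriv (n - j) P).coeff t
      = ((t + (n - j)).choose (n - j) : ℝ) * esymF (Finset.univ : Finset (Fin n)) lam (j - t) := by
    intro t ht
    rw [Polynomial.hasseDeriv_coeff]
    have h2 : P.coeff (t + (n - j)) = esymF (Finset.univ : Finset (Fin n)) lam (j - t) := by
      have h := esymF_coeff (Finset.univ : Finset (Fin n)) lam (r := j - t)
        (by rw [hcard]; omega)
      rw [hcard] at h
      rw [show t + (n - j) = n - (j - t) by omega]
      exact h
    rw [h2]
  have hterm : ∀ t ∈ Finset.range (j + 1),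
      0 ≤ (Polynomial.hasseDeriv (n - j) P).coeff t * u ^ t := by
    intro t ht
    rw [Finset.mem_range] at ht
    rw [hcoeff t (by omega)]
    have hch : (0 : ℝ) ≤ ((t + (n - j)).choose (n - j) : ℝ) := by positivity
    have hs : 0 ≤ esymF (Finset.univ : Finset (Fin n)) lam (j - t) := by
      rcases Nat.eq_zero_or_pos (j - t) with h | h
      · rw [h, esymF_zero]; norm_num
      · exact le_of_lt (hpos (j - t) h (by omega))
    positivity
  refine Finset.sum_pos' hterm ⟨0, Finset.mem_range.mpr (by omega), ?_⟩
  rw [hcoeff 0 (by omega)]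
  have h0 : (0 + (n - j)).choose (n - j) = 1 := by
    rw [Nat.zero_add, Nat.choose_self]
  rw [h0, Nat.sub_zero]
  have := hpos j hj1 le_rfl
  simpa using this

lemma esymF_erase_pos : ∀ K : ℕ, 1 ≤ K → ∀ n : ℕ, ∀ lam : Fin n → ℝ, K + 1 ≤ n →
    (∀ r : ℕ, 1 ≤ r → r ≤ K → 0 < esymF (Finset.univ : Finset (Fin n)) lam r) →
    ∀ i : Fin n, 0 < esymF (Finset.univ.erase i) lam (K - 1) := by
  intro K
  induction K using Nat.strong_induction_on with
  | _ K IH =>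
  intro hK1 n lam hKn hpos i
  rcases Nat.lt_or_ge K 2 with hK2 | hK2
  · have hK : K = 1 := by omega
    subst hK
    norm_num [esymF_zero]
  by_contra hcon
  push_neg at hcon
  set g : ℝ → ℝ := fun t => esymF (Finset.univ.erase i) (fun p => (1 - t) * lam p + t) (K - 1)
    with hg
  have hgc : Continuous g := by
    rw [hg]; unfold esymF
    refine continuous_finset_sum _ fun s _ => ?_
    exact continuous_finset_prod _ fun p _ => by fun_prop
  have hg0 : g 0 ≤ 0 := by
    show esymF (Finset.univ.erase i) (fun p => (1 - (0:ℝ)) * lam p + 0) (K - 1) ≤ 0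
    have he : (fun p => (1 - (0:ℝ)) * lam p + 0) = lam := by funext p; ring
    rw [he]; exact hcon
  have hg1 : 0 < g 1 := by
    show 0 < esymF (Finset.univ.erase i) (fun p => (1 - (1:ℝ)) * lam p + 1) (K - 1)
    have he : (fun p => (1 - (1:ℝ)) * lam p + 1) = fun _ => (1:ℝ) := by funext p; ring
    rw [he]
    unfold esymF
    rw [Finset.sum_congr rfl (fun t _ => Finset.prod_const_one), Finset.sum_const,
      nsmul_eq_mul, mul_one]
    have hc : 0 < (Finset.powersetCard (K - 1) (Finset.univ.erase i)).card := by
      rw [Finset.card_powersetCard]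
      apply Nat.choose_pos
      rw [Finset.card_erase_of_mem (Finset.mem_univ i)]
      simp only [Finset.card_univ, Fintype.card_fin]
      omega
    exact_mod_cast hc
  obtain ⟨t0, ht0mem, hgt0⟩ := intermediate_value_Icc (by norm_num : (0:ℝ) ≤ 1)
    hgc.continuousOn ⟨hg0, le_of_lt hg1⟩
  have ht00 : 0 ≤ t0 := ht0mem.1
  have ht0lt : t0 < 1 := by
    rcases lt_or_eq_of_le ht0mem.2 with h | h
    · exact h
    · exfalso; rw [h] at hgt0; rw [hgt0] at hg1; exact lt_irrefl 0 hg1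
  have hμK1 : esymF (Finset.univ.erase i) (fun p => (1 - t0) * lam p + t0) (K - 1) = 0 := by
    have h := hgt0; rw [hg] at h; exact h
  set μ : Fin n → ℝ := fun p => (1 - t0) * lam p + t0 with hμ
  have h1t : 0 < 1 - t0 := by linarith
  set u : ℝ := t0 / (1 - t0) with hu
  have hu0 : 0 ≤ u := div_nonneg ht00 h1t.le
  have hμeq : μ = fun p => (1 - t0) * ((fun q => lam q + u) p) := by
    funext p; rw [hμ, hu]; field_simp
  have hμpos : ∀ r : ℕ, 1 ≤ r → r ≤ K → 0 < esymF (Finset.univ : Finset (Fin n)) μ r := by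
    intro r hr1 hrK
    rw [hμeq, esymF_smul]
    have hsp := esym_shift_pos n lam r (by omega)
      (fun r' h1 h2 => hpos r' h1 (le_trans h2 hrK)) hu0
    exact mul_pos (pow_pos h1t r) hsp
  have hμsmall : ∀ r : ℕ, r ≤ K - 2 → 0 < esymF (Finset.univ.erase i) μ r := by
    intro r hr
    rcases Nat.eq_zero_or_pos r with rfl | hr1
    · norm_num [esymF_zero]
    · have h := IH (r + 1) (by omega) (by omega) n μ (by omega)
        (fun r' h1 h2 => hμpos r' h1 (by omega)) i
      simpa using h
  have hμK : 0 < esymF (Finset.univ.erase i) μ K := by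
    have hrec := esymF_erase_rec Finset.univ μ (Finset.mem_univ i) (K - 1)
    rw [show K - 1 + 1 = K by omega] at hrec
    have h := hμpos K (by omega) le_rfl
    rw [hrec, hμK1, mul_zero, add_zero] at h
    exact h
  have hcard : (Finset.univ.erase i).card = n - 1 := by
    rw [Finset.card_erase_of_mem (Finset.mem_univ i)]
    simp only [Finset.card_univ, Fintype.card_fin]
  have hnewton := newtonF (Finset.univ.erase i) μ (K - 1) (by omega) (by rw [hcard]; omega)
  rw [hcard, show K - 1 - 1 = K - 2 by omega, show K - 1 + 1 = K by omega, hμK1] at hnewton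
  have hAB : (0:ℝ) < ((K - 1 : ℕ) : ℝ) + 1 := by positivity
  have hB : (0:ℝ) < ((n - 1 : ℕ) : ℝ) - ((K - 1 : ℕ) : ℝ) + 1 := by
    have hle : (K - 1 : ℕ) ≤ (n - 1 : ℕ) := by omega
    have := Nat.cast_le (α := ℝ) |>.mpr hle
    linarith
  have hprodpos := mul_pos (mul_pos hAB hB) (mul_pos (hμsmall (K - 2) le_rfl) hμK)
  nlinarith [hnewton, hprodpos]

set_option maxHeartbeats 1000000 in
lemma newton_norm (m : ℕ) (e : ℕ → ℝ) (j : ℕ) (hj : 1 ≤ j) (hjm : j + 1 ≤ m)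
    (hraw : ((j:ℝ)+1) * (((m:ℝ) - j) + 1) * (e (j-1) * e (j+1)) ≤ (j:ℝ) * ((m:ℝ) - j) * e j ^ 2) :
    e (j-1) / (m.choose (j-1) : ℝ) * (e (j+1) / (m.choose (j+1) : ℝ))
      ≤ (e j / (m.choose j : ℝ)) ^ 2 := by
  obtain ⟨a, rfl⟩ : ∃ a, j = a + 1 := ⟨j - 1, by omega⟩
  obtain ⟨b, rfl⟩ : ∃ b, m = a + 2 + b := ⟨m - a - 2, by omega⟩
  set x := e (a + 1 - 1) with hx
  set y := e (a + 1 + 1) with hy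
  set z := e (a + 1) with hz
  have hA : ((a + 2 + b).choose (a + 1 - 1) : ℝ)
      = ((a+2+b).factorial : ℝ) / ((a.factorial : ℝ) * ((b+2).factorial : ℝ)) := by
    rw [show a + 1 - 1 = a by omega, Nat.cast_choose ℝ (show a ≤ a + 2 + b by omega),
      show a + 2 + b - a = b + 2 by omega]
  have hB : ((a + 2 + b).choose (a + 1 + 1) : ℝ)
      = ((a+2+b).factorial : ℝ) / (((a+2).factorial : ℝ) * ((b).factorial : ℝ)) := by
    rw [Nat.cast_choose ℝ (show a + 1 + 1 ≤ a + 2 + b by omega),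
      show a + 2 + b - (a + 1 + 1) = b by omega, show a + 1 + 1 = a + 2 by omega]
  have hC : ((a + 2 + b).choose (a + 1) : ℝ)
      = ((a+2+b).factorial : ℝ) / (((a+1).factorial : ℝ) * ((b+1).factorial : ℝ)) := by
    rw [Nat.cast_choose ℝ (show a + 1 ≤ a + 2 + b by omega),
      show a + 2 + b - (a + 1) = b + 1 by omega]
  have hfa1 : ((a+1).factorial : ℝ) = ((a:ℝ)+1) * (a.factorial : ℝ) := by
    rw [Nat.factorial_succ]; push_cast; ring
  have hfa2 : ((a+2).factorial : ℝ) = ((a:ℝ)+2) * (((a:ℝ)+1) * (a.factorial : ℝ)) := by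
    rw [show a + 2 = (a+1) + 1 by omega, Nat.factorial_succ]
    push_cast [Nat.factorial_succ]; ring
  have hfb1 : ((b+1).factorial : ℝ) = ((b:ℝ)+1) * (b.factorial : ℝ) := by
    rw [Nat.factorial_succ]; push_cast; ring
  have hfb2 : ((b+2).factorial : ℝ) = ((b:ℝ)+2) * (((b:ℝ)+1) * (b.factorial : ℝ)) := by
    rw [show b + 2 = (b+1) + 1 by omega, Nat.factorial_succ]
    push_cast [Nat.factorial_succ]; ring
  have hMpos : (0:ℝ) < ((a+2+b).factorial : ℝ) := by exact_mod_cast (a+2+b).factorial_pos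
  have hapos : (0:ℝ) < (a.factorial : ℝ) := by exact_mod_cast a.factorial_pos
  have hbpos : (0:ℝ) < (b.factorial : ℝ) := by exact_mod_cast b.factorial_pos
  have hApos : (0:ℝ) < ((a + 2 + b).choose (a + 1 - 1) : ℝ) := by
    rw [hA, hfb2]; positivity
  have hBpos : (0:ℝ) < ((a + 2 + b).choose (a + 1 + 1) : ℝ) := by
    rw [hB, hfa2]; positivity
  have hCpos : (0:ℝ) < ((a + 2 + b).choose (a + 1) : ℝ) := by
    rw [hC, hfa1, hfb1]; positivity
  -- identity: j(m-j) C^2 = (j+1)(m-j+1) A B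
  have hid : ((a:ℝ)+1) * (((a:ℝ)+2+(b:ℝ)) - ((a:ℝ)+1)) * ((a + 2 + b).choose (a + 1) : ℝ)^2
      = (((a:ℝ)+1)+1) * ((((a:ℝ)+2+(b:ℝ)) - ((a:ℝ)+1)) + 1) *
        (((a + 2 + b).choose (a + 1 - 1) : ℝ) * ((a + 2 + b).choose (a + 1 + 1) : ℝ)) := by
    rw [hA, hB, hC, hfa1, hfa2, hfb1, hfb2]
    field_simp
    ring
  have hmj : ((a + 2 + b : ℕ) : ℝ) - ((a + 1 : ℕ) : ℝ) = ((a:ℝ)+2+(b:ℝ)) - ((a:ℝ)+1) := by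
    push_cast; ring
  rw [div_mul_div_comm, div_pow, div_le_div_iff₀ (by positivity) (by positivity)]
  have hraw' : (((a:ℝ)+1)+1) * ((((a:ℝ)+2+(b:ℝ)) - ((a:ℝ)+1)) + 1) * (x * y)
      ≤ ((a:ℝ)+1) * (((a:ℝ)+2+(b:ℝ)) - ((a:ℝ)+1)) * z ^ 2 := by
    have h := hraw
    push_cast at h
    convert h using 2 <;> push_cast <;> ring
  set A := ((a + 2 + b).choose (a + 1 - 1) : ℝ)
  set B := ((a + 2 + b).choose (a + 1 + 1) : ℝ)
  set CC := ((a + 2 + b).choose (a + 1) : ℝ)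
  have h2 := mul_le_mul_of_nonneg_right hraw' (sq_nonneg CC)
  have h3 : ((a:ℝ)+1) * (((a:ℝ)+2+(b:ℝ)) - ((a:ℝ)+1)) * z^2 * CC^2
      = (((a:ℝ)+1)+1) * ((((a:ℝ)+2+(b:ℝ)) - ((a:ℝ)+1)) + 1) * (z^2 * (A * B)) := by
    linear_combination z^2 * hid
  have hP : (0:ℝ) < (((a:ℝ)+1)+1) * ((((a:ℝ)+2+(b:ℝ)) - ((a:ℝ)+1)) + 1) := by
    have : ((a:ℝ)+2+(b:ℝ)) - ((a:ℝ)+1) = (b:ℝ) + 1 := by ring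
    rw [this]; positivity
  refine le_of_mul_le_mul_left ?_ hP
  nlinarith [h2, h3]

lemma maclaurin_chain (m k : ℕ) (hk : 2 ≤ k) (hkm : k ≤ m) (e : ℕ → ℝ) (h0 : e 0 = 1)
    (hpos : ∀ r, 1 ≤ r → r ≤ k - 1 → 0 < e r) (hek : 0 < e k)
    (hN : ∀ j, 1 ≤ j → j + 1 ≤ k →
      e (j-1) / (m.choose (j-1) : ℝ) * (e (j+1) / (m.choose (j+1) : ℝ))
        ≤ (e j / (m.choose j : ℝ)) ^ 2) :
    e k / (m.choose k : ℝ) ≤ e 1 / (m.choose 1 : ℝ) * (e (k-1) / (m.choose (k-1) : ℝ)) := by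
  set p : ℕ → ℝ := fun r => e r / (m.choose r : ℝ) with hp
  have hchpos : ∀ r, r ≤ m → (0:ℝ) < (m.choose r : ℝ) := fun r hr => by
    exact_mod_cast Nat.choose_pos hr
  have hppos : ∀ r, 1 ≤ r → r ≤ k - 1 → 0 < p r := fun r h1 h2 =>
    div_pos (hpos r h1 h2) (hchpos r (by omega))
  have hp0 : p 0 = 1 := by
    rw [hp]; simp [h0]
  have claim : ∀ r, 1 ≤ r → r ≤ k - 1 → p (r+1) ≤ p 1 * p r := by
    intro r hr1
    induction r, hr1 using Nat.le_induction with
    | base =>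
      intro h1
      have h := hN 1 le_rfl (by omega)
      rw [show (1:ℕ) - 1 = 0 by omega] at h
      have : p 0 * p 2 ≤ p 1 ^ 2 := h
      rw [hp0, one_mul] at this
      calc p (1+1) = p 2 := by norm_num
        _ ≤ p 1 ^ 2 := this
        _ = p 1 * p 1 := sq (p 1) ▸ by ring
    | succ r hr IH =>
      intro hrk
      have hIH := IH (by omega)
      have hnewt := hN (r + 1) (by omega) (by omega)
      rw [show r + 1 - 1 = r by omega] at hnewt
      have hpr : 0 < p r := by
        rcases Nat.eq_zero_or_pos r with rfl | hr1
        · rw [hp0]; norm_num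
        · exact hppos r hr1 (by omega)
      have hpr1 : 0 < p (r + 1) := hppos (r+1) (by omega) (by omega)
      have hp1 : 0 < p 1 := hppos 1 le_rfl (by omega)
      have : p r * p (r + 1 + 1) ≤ p (r+1) ^ 2 := hnewt
      nlinarith [this, hIH, hpr, hpr1, hp1]
  have hfin := claim (k - 1) (by omega) le_rfl
  rw [show k - 1 + 1 = k by omega] at hfin
  calc p k ≤ p 1 * p (k-1) := hfin
    _ = _ := by rw [hp]

lemma esym_update_eq (n : ℕ) (lam : Fin n → ℝ) (i : Fin n) (r : ℕ) :
    esymF (Finset.univ : Finset (Fin n)) (Function.update lam i 0) r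
      = esymF (Finset.univ.erase i) lam r := by
  unfold esymF
  have hsub : Finset.powersetCard r (Finset.univ.erase i)
      ⊆ Finset.powersetCard r (Finset.univ : Finset (Fin n)) :=
    Finset.powersetCard_mono (Finset.subset_univ _)
  rw [← Finset.sum_subset hsub (fun t ht hnt => ?_)]
  · refine Finset.sum_congr rfl fun t ht => Finset.prod_congr rfl fun p hp => ?_
    rw [Finset.mem_powersetCard] at ht
    have hpi : p ≠ i := fun h => (Finset.notMem_erase i _) (h ▸ ht.1 hp)
    rw [Function.update_of_ne hpi]
  · have hit : i ∈ t := by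
      by_contra hi
      rw [Finset.mem_powersetCard] at ht
      exact hnt (Finset.mem_powersetCard.mpr ⟨Finset.subset_erase.mpr ⟨ht.1, hi⟩, ht.2⟩)
    exact Finset.prod_eq_zero hit (Function.update_self i 0 lam)

theorem newton_ric_eigen_inequality' (k : ℕ) (hk : 2 ≤ k)
    (lam : Fin (2 * k) → ℝ)
    (hG : ∀ j : ℕ, 1 ≤ j → j ≤ k → 0 < esymF (Finset.univ : Finset (Fin (2*k))) lam j) :
    ∀ i : Fin (2 * k),
      ((2 * k : ℝ) - 1) * esymF (Finset.univ : Finset (Fin (2*k))) lam k ≤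
        esymF (Finset.univ : Finset (Fin (2*k))) (Function.update lam i 0) (k-1) *
          (((2 * k : ℝ) - 2) * lam i + esymF (Finset.univ : Finset (Fin (2*k))) lam 1) := by
  intro i
  have hn : (2:ℕ) * k = 2 * k := rfl
  set e : ℕ → ℝ := fun r => esymF (Finset.univ.erase i) lam r with he
  have hcard : (Finset.univ.erase i).card = 2*k - 1 := by
    rw [Finset.card_erase_of_mem (Finset.mem_univ i)]
    simp only [Finset.card_univ, Fintype.card_fin]
  have h0 : e 0 = 1 := esymF_zero _ _
  -- positivity of e r for 1 ≤ r ≤ k - 1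
  have hpos : ∀ r, 1 ≤ r → r ≤ k - 1 → 0 < e r := by
    intro r h1 h2
    have := esymF_erase_pos (r + 1) (by omega) (2*k) lam (by omega)
      (fun r' h1' h2' => hG r' h1' (by omega)) i
    simpa using this
  -- recursions
  have hreck : esymF (Finset.univ : Finset (Fin (2*k))) lam k = e k + lam i * e (k-1) := by
    have h := esymF_erase_rec (Finset.univ : Finset (Fin (2*k))) lam (Finset.mem_univ i) (k-1)
    rw [show k - 1 + 1 = k by omega] at h
    exact h
  have hrec1 : esymF (Finset.univ : Finset (Fin (2*k))) lam 1 = e 1 + lam i := by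
    have h := esymF_erase_rec (Finset.univ : Finset (Fin (2*k))) lam (Finset.mem_univ i) 0
    rw [show (0:ℕ) + 1 = 1 from rfl] at h
    rw [h]
    show e 1 + lam i * e 0 = e 1 + lam i
    rw [h0, mul_one]
  -- key inequality
  have hkey : ((2 * k : ℝ) - 1) * e k ≤ e 1 * e (k - 1) := by
    have he1 : 0 < e 1 := hpos 1 le_rfl (by omega)
    have hek1 : 0 < e (k-1) := hpos (k-1) (by omega) le_rfl
    rcases le_or_gt (e k) 0 with hek | hek
    · have h1 : ((2 * k : ℝ) - 1) * e k ≤ 0 := by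
        apply mul_nonpos_of_nonneg_of_nonpos _ hek
        have : (1:ℝ) ≤ (k:ℝ) := by exact_mod_cast (by omega : 1 ≤ k)
        linarith
      nlinarith [mul_pos he1 hek1]
    · set m := 2*k - 1 with hm
      have hkm : k ≤ m := by omega
      have hN : ∀ j, 1 ≤ j → j + 1 ≤ k →
          e (j-1) / (m.choose (j-1) : ℝ) * (e (j+1) / (m.choose (j+1) : ℝ))
            ≤ (e j / (m.choose j : ℝ)) ^ 2 := by
        intro j hj1 hjk
        apply newton_norm m e j hj1 (by omega)
        have hraw := newtonF (Finset.univ.erase i) lam j hj1 (by rw [hcard]; omega)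
        rw [hcard] at hraw
        exact hraw
      have hchain := maclaurin_chain m k hk hkm e h0 hpos hek hN
      -- m.choose k = m.choose (k-1), m.choose 1 = m
      have hsymm : m.choose (k-1) = m.choose k := by
        have := Nat.choose_symm (n := m) (k := k) (by omega)
        rw [show m - k = k - 1 by omega] at this
        exact this
      have hch1 : m.choose 1 = m := Nat.choose_one_right m
      rw [hsymm, hch1] at hchain
      have hCpos : (0:ℝ) < (m.choose k : ℝ) := by
        exact_mod_cast Nat.choose_pos (by omega : k ≤ m)
      have hmpos : (0:ℝ) < (m : ℝ) := by
        have : 1 ≤ m := by omega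
        exact_mod_cast (by omega : 0 < m)
      rw [div_mul_div_comm, div_le_div_iff₀ hCpos (by positivity)] at hchain
      have hcast : ((m : ℕ) : ℝ) = (2 * k : ℝ) - 1 := by
        rw [hm]
        rw [Nat.cast_sub (by omega)]
        push_cast
        ring
      have hfin : ((m:ℕ):ℝ) * e k ≤ e 1 * e (k-1) := by
        refine le_of_mul_le_mul_right ?_ hCpos
        nlinarith [hchain]
      rw [hcast] at hfin
      exact hfin
  rw [hreck, hrec1, esym_update_eq]
  have hcast2 : (2:ℝ) ≤ (2 * k : ℝ) := by
    have : (1:ℝ) ≤ (k:ℝ) := by exact_mod_cast (by omega : 1 ≤ k)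
    linarith
  nlinarith [hkey]

/-- for `n = 2k`, `λ ∈ Γ_k^+`, and any `i`,
`σ_{k−1}(λ|i) ((n−2)λ_i + σ_1(λ)) ≥ (n−1) σ_k(λ)`. -/
theorem newton_ric_eigen_inequality (k : ℕ) (hk : 2 ≤ k)
    (lam : Fin (2 * k) → ℝ)
    (hG : ∀ j : ℕ, 1 ≤ j → j ≤ k → 0 < esym (2 * k) j lam) :
    ∀ i : Fin (2 * k),
      ((2 * k : ℝ) - 1) * esym (2 * k) k lam ≤
        esym (2 * k) (k - 1) (Function.update lam i 0) *
          (((2 * k : ℝ) - 2) * lam i + esym (2 * k) 1 lam) := by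
  intro i
  exact newton_ric_eigen_inequality' k hk lam (fun j h1 h2 => hG j h1 h2) i
end

section
/- Let n ≥ 1 and 1 ≤ k ≤ n. For every real symmetric n×n matrix A and every vector X ∈ ℝ^n, σ_k(A − X⊗X) = σ_k(A) − Xᵀ T_{k−1}(A) X, where X⊗X is the rank-one matrix with entries X_a X_b. -/
open Matrix

/-- `σ_k(A)`: the k-th elementary symmetric function of the eigenvalues of `A`,
defined as `(−1)^k` times the coefficient of `X^(n−k)` in the characteristic polynomial. -/
noncomputable def sigmaMat {n : ℕ} (A : Matrix (Fin n) (Fin n) ℝ) (k : ℕ) : ℝ :=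
  (-1 : ℝ) ^ k * A.charpoly.coeff (n - k)

/-- The k-th Newton transform `T_k(A) = Σ_{j=0}^{k} (−1)^j σ_{k−j}(A) A^j`. -/
noncomputable def newtonT {n : ℕ} (A : Matrix (Fin n) (Fin n) ℝ) (k : ℕ) :
    Matrix (Fin n) (Fin n) ℝ :=
  ∑ j ∈ Finset.range (k + 1), ((-1 : ℝ) ^ j * sigmaMat A (k - j)) • A ^ j

/-- `A ∈ Γ_k^+` iff `σ_j(A) > 0` for all `1 ≤ j ≤ k`. -/
def GammaPlus {n : ℕ} (k : ℕ) (A : Matrix (Fin n) (Fin n) ℝ) : Prop :=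
  ∀ j : ℕ, 1 ≤ j → j ≤ k → 0 < sigmaMat A j

open Polynomial Finset

set_option synthInstance.maxHeartbeats 1000000
set_option maxHeartbeats 1000000

namespace SigmaAux

variable {n : ℕ}

/-- Faddeev–LeVerrier coefficient matrices. -/
noncomputable def Bmat (A : Matrix (Fin n) (Fin n) ℝ) (i : ℕ) : Matrix (Fin n) (Fin n) ℝ :=
  ∑ j ∈ Finset.range (n - i), A.charpoly.coeff (i + 1 + j) • A ^ j

lemma Bmat_of_le (A : Matrix (Fin n) (Fin n) ℝ) {i : ℕ} (h : n ≤ i) : Bmat A i = 0 := by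
  simp [Bmat, Nat.sub_eq_zero_of_le h]

lemma coeff_charpoly_of_lt (A : Matrix (Fin n) (Fin n) ℝ) {i : ℕ} (h : n < i) :
    A.charpoly.coeff i = 0 := by
  apply Polynomial.coeff_eq_zero_of_natDegree_lt
  simpa using h

lemma Bmat_rec (A : Matrix (Fin n) (Fin n) ℝ) (i : ℕ) :
    Bmat A i = A * Bmat A (i + 1) + A.charpoly.coeff (i + 1) • 1 := by
  rcases lt_or_ge i n with h | h
  · have hni : n - i = (n - (i + 1)) + 1 := by omega
    rw [Bmat, hni, Finset.sum_range_succ', Bmat, Finset.mul_sum]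
    congr 1
    · refine Finset.sum_congr rfl fun j hj => ?_
      rw [mul_smul_comm, ← pow_succ']
      have : i + 1 + (j + 1) = i + 1 + 1 + j := by omega
      rw [this]
  · rw [Bmat_of_le A h, Bmat_of_le A (by omega), coeff_charpoly_of_lt A (by omega)]
    simp

lemma Bmat_CH (A : Matrix (Fin n) (Fin n) ℝ) :
    A * Bmat A 0 + A.charpoly.coeff 0 • 1 = 0 := by
  have h := A.aeval_self_charpoly
  rw [Polynomial.aeval_eq_sum_range, Matrix.charpoly_natDegree_eq_dim, Fintype.card_fin,
    Finset.sum_range_succ'] at h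
  rw [Bmat, Finset.mul_sum]
  rw [← h]
  congr 1
  · refine Finset.sum_congr rfl fun j hj => ?_
    rw [mul_smul_comm, ← pow_succ']
    have : 0 + 1 + j = j + 1 := by omega
    rw [this]

noncomputable def bpoly (A : Matrix (Fin n) (Fin n) ℝ) : Polynomial (Matrix (Fin n) (Fin n) ℝ) :=
  ∑ i ∈ Finset.range n, Polynomial.C (Bmat A i) * Polynomial.X ^ i

lemma bpoly_coeff (A : Matrix (Fin n) (Fin n) ℝ) (k : ℕ) : (bpoly A).coeff k = Bmat A k := by
  rw [bpoly, Polynomial.finset_sum_coeff]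
  simp only [Polynomial.coeff_C_mul, Polynomial.coeff_X_pow, mul_ite, mul_one, mul_zero]
  rw [Finset.sum_ite_eq (Finset.range n) k (fun i => Bmat A i)]
  by_cases h : k < n
  · simp [h]
  · rw [Bmat_of_le A (by omega)]
    simp [h]

noncomputable def Bp (A : Matrix (Fin n) (Fin n) ℝ) : Matrix (Fin n) (Fin n) ℝ[X] :=
  matPolyEquiv.symm (bpoly A)

lemma Bp_coeff (A : Matrix (Fin n) (Fin n) ℝ) (i j : Fin n) (m : ℕ) :
    (Bp A i j).coeff m = Bmat A m i j := by
  rw [Bp, matPolyEquiv_symm_apply_coeff, bpoly_coeff]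

lemma dot_coeff (A : Matrix (Fin n) (Fin n) ℝ) (u : Fin n → ℝ) (m : ℕ) :
    ((fun i => Polynomial.C (u i)) ⬝ᵥ (Bp A) *ᵥ (fun j => Polynomial.C (u j))).coeff m
      = u ⬝ᵥ (Bmat A m) *ᵥ u := by
  simp only [dotProduct, mulVec, Polynomial.finset_sum_coeff, Finset.mul_sum,
    Polynomial.coeff_C_mul, Polynomial.coeff_mul_C]
  refine Finset.sum_congr rfl fun i _ => Finset.sum_congr rfl fun j _ => ?_
  rw [Bp_coeff]

lemma charmatrix_mul_Bp (A : Matrix (Fin n) (Fin n) ℝ) :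
    charmatrix A * Bp A = A.charpoly • 1 := by
  apply matPolyEquiv.injective
  rw [_root_.map_mul, matPolyEquiv_charmatrix, Bp, AlgEquiv.apply_symm_apply, matPolyEquiv_smul_one]
  ext m : 1
  rw [Polynomial.coeff_map, sub_mul, Polynomial.coeff_sub, Polynomial.coeff_C_mul,
    Algebra.algebraMap_eq_smul_one]
  cases m with
  | zero =>
      rw [Polynomial.mul_coeff_zero, Polynomial.coeff_X_zero, zero_mul, bpoly_coeff]
      have h := Bmat_CH A
      rw [zero_sub, neg_eq_iff_add_eq_zero]
      exact h
  | succ j =>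
      rw [Polynomial.coeff_X_mul, bpoly_coeff, bpoly_coeff]
      have h := Bmat_rec A j
      rw [sub_eq_iff_eq_add, add_comm]
      exact h

/-- Matrix determinant lemma variant over a field. -/
lemma det_add_vecMulVec_field {F : Type*} [Field F] {m : Type*} [Fintype m] [DecidableEq m]
    (M B : Matrix m m F) (hMB : M * B = M.det • 1) (hd : M.det ≠ 0) (u : m → F) :
    (M + vecMulVec u u).det = M.det + u ⬝ᵥ B *ᵥ u := by
  have hu : IsUnit M.det := isUnit_iff_ne_zero.mpr hd
  have hBinv : B = M.det • M⁻¹ := by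
    have h1 : M⁻¹ * (M * B) = M⁻¹ * (M.det • 1) := by rw [hMB]
    rwa [← Matrix.mul_assoc, Matrix.nonsing_inv_mul M hu, Matrix.one_mul, Matrix.mul_smul,
      Matrix.mul_one] at h1
  rw [vecMulVec_eq Unit, Matrix.det_add_replicateCol_mul_replicateRow hu]
  have h2 : (1 + replicateRow Unit u * M⁻¹ * replicateCol Unit u).det = 1 + u ⬝ᵥ M⁻¹ *ᵥ u := by
    rw [Matrix.det_unique, Matrix.add_apply, Matrix.one_apply_eq, Matrix.mul_assoc,
      ← Matrix.replicateCol_mulVec, Matrix.replicateRow_mul_replicateCol_apply]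
  rw [h2, hBinv, mul_add, mul_one]
  congr 1
  rw [Matrix.smul_mulVec, dotProduct_smul, smul_eq_mul]

lemma det_charmatrix_add (A : Matrix (Fin n) (Fin n) ℝ) (u : Fin n → ℝ) :
    (charmatrix A + vecMulVec (fun i => Polynomial.C (u i)) (fun i => Polynomial.C (u i))).det
      = A.charpoly
        + (fun i => Polynomial.C (u i)) ⬝ᵥ (Bp A) *ᵥ (fun i => Polynomial.C (u i)) := by
  set f := algebraMap ℝ[X] (RatFunc ℝ) with hf
  have hinj : Function.Injective f := IsFractionRing.injective ℝ[X] (RatFunc ℝ)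
  apply hinj
  set uC : Fin n → ℝ[X] := fun i => Polynomial.C (u i) with huC
  set M := charmatrix A with hM
  set B := Bp A with hB
  have hdetM : M.det = A.charpoly := rfl
  have hdet2 : f M.det = (M.map ⇑f).det := by
    rw [RingHom.map_det, RingHom.mapMatrix_apply]
  have hsmul : (A.charpoly • (1 : Matrix (Fin n) (Fin n) ℝ[X])).map f
      = (M.map f).det • 1 := by
    rw [← hdet2, hdetM]
    ext i j
    simp only [Matrix.map_apply, Matrix.smul_apply, Matrix.one_apply, smul_eq_mul, mul_ite,
      mul_one, mul_zero, _root_.map_mul]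
    split_ifs <;> simp
  have key : (M.map f) * (B.map f) = (M.map f).det • 1 := by
    rw [← Matrix.map_mul, charmatrix_mul_Bp, hsmul]
  have hd : (M.map f).det ≠ 0 := by
    rw [← hdet2, hdetM]
    intro h
    exact (Matrix.charpoly_monic A).ne_zero (hinj (by simpa using h))
  have hdl := det_add_vecMulVec_field (M.map f) (B.map f) key hd (fun i => f (uC i))
  have hvm : (vecMulVec uC uC).map f
      = vecMulVec (fun i => f (uC i)) (fun i => f (uC i)) := by
    ext i j
    simp [vecMulVec_apply]
  have hmv : (fun i => f (uC i)) ⬝ᵥ (B.map f) *ᵥ (fun i => f (uC i))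
      = f (uC ⬝ᵥ B *ᵥ uC) := by
    rw [RingHom.map_dotProduct]
    congr 1
    ext i
    rw [Function.comp_apply, RingHom.map_mulVec]
    rfl
  rw [map_add, RingHom.map_det, RingHom.mapMatrix_apply, Matrix.map_add _ (map_add f), hvm, hdl, hmv, ← hdet2, hdetM]

lemma Bmat_newton (A : Matrix (Fin n) (Fin n) ℝ) {k : ℕ} (hk1 : 1 ≤ k) (hkn : k ≤ n) :
    Bmat A (n - k) = ((-1 : ℝ) ^ (k - 1)) • newtonT A (k - 1) := by
  rw [Bmat, newtonT, Finset.smul_sum]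
  have h1 : n - (n - k) = k := by omega
  have h2 : k - 1 + 1 = k := by omega
  rw [h1, h2]
  refine Finset.sum_congr rfl fun j hj => ?_
  rw [Finset.mem_range] at hj
  rw [smul_smul]
  congr 1
  rw [sigmaMat]
  have h3 : n - (k - 1 - j) = n - k + 1 + j := by omega
  rw [h3]
  have h4 : (-1 : ℝ) ^ (k - 1) * ((-1) ^ j * (-1) ^ (k - 1 - j)) = 1 := by
    have h5 : j + (k - 1 - j) = k - 1 := by omega
    rw [← pow_add, h5, ← pow_add, ← two_mul, pow_mul]
    norm_num
  calc A.charpoly.coeff (n - k + 1 + j)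
      = ((-1 : ℝ) ^ (k - 1) * ((-1) ^ j * (-1) ^ (k - 1 - j))) *
          A.charpoly.coeff (n - k + 1 + j) := by rw [h4, one_mul]
    _ = (-1 : ℝ) ^ (k - 1) * ((-1) ^ j * ((-1) ^ (k - 1 - j) *
          A.charpoly.coeff (n - k + 1 + j))) := by ring

end SigmaAux

/-- `σ_k(A − X⊗X) = σ_k(A) − Xᵀ T_{k−1}(A) X`. -/
theorem sigma_sub_rank_one (n k : ℕ) (hn : 1 ≤ n) (hk1 : 1 ≤ k) (hkn : k ≤ n)
    (A : Matrix (Fin n) (Fin n) ℝ) (hA : A.IsSymm) (X : Fin n → ℝ) :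
    sigmaMat (A - Matrix.vecMulVec X X) k =
      sigmaMat A k - X ⬝ᵥ (newtonT A (k - 1)).mulVec X := by
  have hq := SigmaAux.det_charmatrix_add A X
  have hcm : charmatrix (A - Matrix.vecMulVec X X)
      = charmatrix A + vecMulVec (fun i => Polynomial.C (X i)) (fun i => Polynomial.C (X i)) := by
    ext i j
    simp only [charmatrix_apply, Matrix.sub_apply, vecMulVec_apply, map_sub, _root_.map_mul,
      Matrix.add_apply]
    ring
  simp only [sigmaMat]
  rw [Matrix.charpoly, hcm, hq, Polynomial.coeff_add, SigmaAux.dot_coeff,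
    SigmaAux.Bmat_newton A hk1 hkn, Matrix.smul_mulVec, dotProduct_smul, smul_eq_mul]
  have hk : (-1 : ℝ) ^ k * (-1) ^ (k - 1) = -1 := by
    have h5 : k + (k - 1) = 2 * (k - 1) + 1 := by omega
    rw [← pow_add, h5, pow_succ, pow_mul]
    norm_num
  linear_combination (X ⬝ᵥ (newtonT A (k - 1)).mulVec X) * hk
end

section
/- Let n ≥ 1 and 0 ≤ k ≤ n. For every real symmetric n×n matrix A and every vector X ∈ ℝ^n, Xᵀ T_k(A − X⊗X) X = Xᵀ T_k(A) X, where X⊗X is the rank-one matrix with entries X_a X_b. -/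
open Matrix

open Polynomial Finset

section Aux

variable {n : ℕ}

lemma charpoly_natDegree (B : Matrix (Fin n) (Fin n) ℝ) : B.charpoly.natDegree = n := by
  simpa using B.charpoly_natDegree_eq_dim

lemma sigmaMat_zero (B : Matrix (Fin n) (Fin n) ℝ) : sigmaMat B 0 = 1 := by
  have h : B.charpoly.coeff n = 1 := by
    have := B.charpoly_monic
    simpa [Polynomial.Monic, Polynomial.leadingCoeff, charpoly_natDegree B] using this
  simp [sigmaMat, h]

lemma newtonT_zero (B : Matrix (Fin n) (Fin n) ℝ) : newtonT B 0 = 1 := by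
  simp [newtonT, sigmaMat_zero]

lemma newtonT_succ (B : Matrix (Fin n) (Fin n) ℝ) (k : ℕ) :
    newtonT B (k + 1) = sigmaMat B (k + 1) • (1 : Matrix (Fin n) (Fin n) ℝ) - B * newtonT B k := by
  rw [newtonT, Finset.sum_range_succ']
  rw [newtonT, Finset.mul_sum]
  simp only [Nat.succ_sub_succ, pow_succ, pow_zero, one_mul, Nat.sub_zero, mul_smul_comm]
  rw [add_comm, sub_eq_add_neg, add_right_inj, ← Finset.sum_neg_distrib]
  refine Finset.sum_congr rfl fun j _ => ?_
  rw [← neg_smul]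
  ring_nf
  rw [Commute.eq (Commute.pow_self B j).symm]

lemma newtonT_comm (B : Matrix (Fin n) (Fin n) ℝ) (j : ℕ) :
    B * newtonT B j = newtonT B j * B := by
  rw [newtonT, Finset.mul_sum, Finset.sum_mul]
  exact Finset.sum_congr rfl fun i _ => by
    rw [mul_smul_comm, smul_mul_assoc, (Commute.pow_self B i).eq]

lemma newtonT_dim (B : Matrix (Fin n) (Fin n) ℝ) : newtonT B n = 0 := by
  have hCH : (aeval B) B.charpoly = 0 := B.aeval_self_charpoly
  have hdeg : B.charpoly.natDegree < n + 1 := by rw [charpoly_natDegree]; omega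
  have hs : (aeval B) B.charpoly = ∑ i ∈ range (n + 1), B.charpoly.coeff i • B ^ i :=
    aeval_eq_sum_range' hdeg B
  have key : newtonT B n = (-1 : ℝ) ^ n • ∑ i ∈ range (n + 1), B.charpoly.coeff i • B ^ i := by
    rw [Finset.smul_sum, newtonT]
    refine Finset.sum_congr rfl fun j hj => ?_
    have hj' : j ≤ n := Nat.lt_succ_iff.mp (Finset.mem_range.mp hj)
    rw [sigmaMat, Nat.sub_sub_self hj', smul_smul, ← mul_assoc, ← pow_add,
      (by omega : j + (n - j) = n)]
  rw [key, ← hs, hCH, smul_zero]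

lemma charpoly_eq_sum (B : Matrix (Fin n) (Fin n) ℝ) :
    B.charpoly = ∑ k ∈ range (n + 1), C ((-1 : ℝ) ^ k * sigmaMat B k) * X ^ (n - k) := by
  have h : ∀ k, ((-1 : ℝ) ^ k * sigmaMat B k) = B.charpoly.coeff (n - k) := by
    intro k
    rw [sigmaMat, ← mul_assoc, ← pow_add, Even.neg_one_pow ⟨k, rfl⟩, one_mul]
  simp_rw [h]
  have := Finset.sum_range_reflect (fun i => C (B.charpoly.coeff i) * X ^ i) (n + 1)
  simp only [Nat.add_sub_cancel] at this
  rw [this]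
  conv_lhs => rw [B.charpoly.as_sum_range_C_mul_X_pow, charpoly_natDegree]

lemma charpoly_eq_sum' (B : Matrix (Fin n) (Fin n) ℝ) :
    B.charpoly = X ^ n -
      ∑ j ∈ range n, ((-1 : ℝ[X]) ^ j * X ^ (n - 1 - j) * C (sigmaMat B (j + 1))) := by
  rw [charpoly_eq_sum, Finset.sum_range_succ']
  have h1 : ∀ j ∈ range n, C ((-1 : ℝ) ^ (j + 1) * sigmaMat B (j + 1)) * X ^ (n - (j + 1))
      = -((-1 : ℝ[X]) ^ j * X ^ (n - 1 - j) * C (sigmaMat B (j + 1))) := by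
    intro j _
    rw [(by omega : n - (j + 1) = n - 1 - j), _root_.map_mul, map_pow, map_neg, Polynomial.C_1]
    ring
  rw [Finset.sum_congr rfl h1, Finset.sum_neg_distrib, pow_zero, one_mul, sigmaMat_zero,
    Polynomial.C_1, one_mul, Nat.sub_zero]
  ring

/-- The Faddeev–LeVerrier style companion matrix of the adjugate of the charmatrix. -/
noncomputable def NNmat (B : Matrix (Fin n) (Fin n) ℝ) : Matrix (Fin n) (Fin n) ℝ[X] :=
  ∑ j ∈ range n, (((-1 : ℝ[X]) ^ j * X ^ (n - 1 - j)) • (newtonT B j).map C)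

lemma mapC_one : (1 : Matrix (Fin n) (Fin n) ℝ).map C = 1 := by
  ext i j
  by_cases h : i = j
  · subst h; simp
  · simp [Matrix.one_apply_ne h, Matrix.map_apply]

lemma mapC_sub (M N : Matrix (Fin n) (Fin n) ℝ) : (M - N).map C = M.map C - N.map C := by
  ext i j; simp [Matrix.map_apply]

lemma mapC_smul (a : ℝ) (M : Matrix (Fin n) (Fin n) ℝ) :
    (a • M).map C = C a • M.map C := by
  ext i j; simp [Matrix.map_apply]

lemma charmatrix_eq (B : Matrix (Fin n) (Fin n) ℝ) :
    charmatrix B = (X : ℝ[X]) • (1 : Matrix (Fin n) (Fin n) ℝ[X]) - B.map C := by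
  ext i j
  by_cases h : i = j
  · subst h; simp
  · simp [charmatrix_apply_ne _ _ _ h, Matrix.one_apply_ne h, Matrix.map_apply]

lemma NN_mul (B : Matrix (Fin n) (Fin n) ℝ) :
    NNmat B * charmatrix B = B.charpoly • (1 : Matrix (Fin n) (Fin n) ℝ[X]) := by
  set g : ℕ → Matrix (Fin n) (Fin n) ℝ[X] :=
    fun j => ((-1 : ℝ[X]) ^ j * X ^ (n - j)) • (newtonT B j).map C with hg
  have hBT : ∀ j : ℕ, B * newtonT B j = sigmaMat B (j+1) • 1 - newtonT B (j+1) := by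
    intro j
    rw [newtonT_succ]; abel
  have hterm : ∀ j ∈ range n,
      ((((-1 : ℝ[X]) ^ j * X ^ (n - 1 - j)) • (newtonT B j).map C) * charmatrix B)
      = g j - g (j + 1) - (((-1 : ℝ[X]) ^ j * X ^ (n - 1 - j) * C (sigmaMat B (j + 1))) • 1) := by
    intro j hj
    have hjn : j < n := Finset.mem_range.mp hj
    rw [smul_mul_assoc, charmatrix_eq, mul_sub, mul_smul_comm, mul_one,
      ← Matrix.map_mul, ← newtonT_comm, hBT j, mapC_sub, mapC_smul, mapC_one]
    rw [hg]
    simp only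
    rw [smul_sub, smul_sub, smul_smul, smul_smul]
    rw [(by rw [mul_assoc, ← pow_succ, (by omega : n - 1 - j + 1 = n - j)] :
      ((-1 : ℝ[X]) ^ j * X ^ (n - 1 - j)) * X = (-1 : ℝ[X]) ^ j * X ^ (n - j))]
    have h2 : ((-1 : ℝ[X]) ^ (j+1) * X ^ (n - (j+1))) = -((-1 : ℝ[X]) ^ j * X ^ (n - 1 - j)) := by
      rw [(by omega : n - (j + 1) = n - 1 - j), pow_succ]
      ring
    rw [h2, neg_smul, sub_neg_eq_add]
    abel
  rw [NNmat, Finset.sum_mul, Finset.sum_congr rfl hterm, Finset.sum_sub_distrib,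
    Finset.sum_range_sub']
  have hg0 : g 0 = (X : ℝ[X]) ^ n • 1 := by
    rw [hg]; simp only [pow_zero, one_mul, Nat.sub_zero, newtonT_zero, mapC_one]
  have hgn : g n = 0 := by
    rw [hg]; simp only [newtonT_dim]; simp
  rw [hg0, hgn, sub_zero, ← Finset.sum_smul, ← sub_smul, ← charpoly_eq_sum']

lemma det_add_col_mul_row_of_left_inv {K : Type*} [Field K] {m : ℕ}
    (M N : Matrix (Fin m) (Fin m) K) (hNM : N * M = M.det • 1) (hd : M.det ≠ 0)
    (u v : Fin m → K) :
    (M + replicateCol (Fin 1) u * replicateRow (Fin 1) v).det = M.det + v ⬝ᵥ N *ᵥ u := by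
  have hM : IsUnit M.det := isUnit_iff_ne_zero.mpr hd
  have hinv : M⁻¹ = M.det⁻¹ • N := by
    apply Matrix.inv_eq_left_inv
    rw [Matrix.smul_mul, hNM, smul_smul, inv_mul_cancel₀ hd, one_smul]
  have hfac : M + replicateCol (Fin 1) u * replicateRow (Fin 1) v
      = M * (1 + replicateCol (Fin 1) (M⁻¹ *ᵥ u) * replicateRow (Fin 1) v) := by
    rw [Matrix.mul_add, Matrix.mul_one, ← Matrix.mul_assoc, ← Matrix.replicateCol_mulVec,
      Matrix.mulVec_mulVec, Matrix.mul_nonsing_inv _ hM, Matrix.one_mulVec]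
  rw [hfac, Matrix.det_mul]
  erw [Matrix.det_one_add_replicateCol_mul_replicateRow (ι := Fin 1) (M⁻¹ *ᵥ u) v]
  rw [hinv,
    Matrix.smul_mulVec, dotProduct_smul, smul_eq_mul, mul_add, mul_one,
    ← mul_assoc, mul_inv_cancel₀ hd, one_mul]

lemma mapC_add (M N : Matrix (Fin n) (Fin n) ℝ) : (M + N).map C = M.map C + N.map C := by
  ext i j; simp [Matrix.map_apply]

lemma charpoly_add_vecMulVec (B : Matrix (Fin n) (Fin n) ℝ) (u : Fin n → ℝ) :
    (B + vecMulVec u u).charpoly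
      = B.charpoly - (fun i => C (u i)) ⬝ᵥ (NNmat B) *ᵥ (fun i => C (u i)) := by
  set u' : Fin n → ℝ[X] := fun i => C (u i) with hu'
  have hv : (vecMulVec u u).map C = replicateCol (Fin 1) u' * replicateRow (Fin 1) u' := by
    erw [← vecMulVec_eq (Fin 1)]
    ext i j
    simp [Matrix.vecMulVec_apply, Matrix.map_apply, hu']
  have hcm : charmatrix (B + vecMulVec u u)
      = charmatrix B + replicateCol (Fin 1) (-u') * replicateRow (Fin 1) u' := by
    rw [charmatrix_eq, charmatrix_eq, mapC_add, hv]
    have : replicateCol (Fin 1) (-u') = -(replicateCol (Fin 1) u') := by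
      ext i j; simp
    rw [this, Matrix.neg_mul]
    abel
  set K := FractionRing ℝ[X]
  set φ : ℝ[X] →+* K := algebraMap ℝ[X] K with hφ
  have hinj : Function.Injective φ := IsFractionRing.injective _ _
  apply hinj
  set MK := (charmatrix B).map φ with hMK
  set NK := (NNmat B).map φ with hNK
  have hdetM : MK.det = φ B.charpoly := (RingHom.map_det φ _).symm
  have hsm1 : ∀ p : ℝ[X], (p • (1 : Matrix (Fin n) (Fin n) ℝ[X])).map φ
      = φ p • (1 : Matrix (Fin n) (Fin n) K) := by
    intro p; ext i j
    simp [Matrix.map_apply, Matrix.one_apply, apply_ite φ]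
  have hNM : NK * MK = MK.det • 1 := by
    rw [hMK, hNK, ← Matrix.map_mul, NN_mul, hsm1, hdetM]
  have hd : MK.det ≠ 0 := by
    rw [hdetM]
    intro h
    exact (B.charpoly_monic.ne_zero) (hinj (by simpa using h))
  have hmap : (charmatrix (B + vecMulVec u u)).map φ
      = MK + replicateCol (Fin 1) (φ ∘ (-u')) * replicateRow (Fin 1) (φ ∘ u') := by
    rw [hcm]
    ext i j
    simp [Matrix.map_apply, Matrix.add_apply, Matrix.mul_apply, Fin.sum_univ_one,
      Matrix.replicateCol_apply, Matrix.replicateRow_apply, hMK]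
    ring
  have lhs : φ ((B + vecMulVec u u).charpoly)
      = MK.det + (φ ∘ u') ⬝ᵥ NK *ᵥ (φ ∘ (-u')) := by
    rw [Matrix.charpoly, RingHom.map_det, RingHom.mapMatrix_apply, hmap,
      det_add_col_mul_row_of_left_inv MK NK hNM hd]
  have hmv : φ ∘ (NNmat B *ᵥ u') = NK *ᵥ (φ ∘ u') := by
    funext i
    exact RingHom.map_mulVec φ (NNmat B) u' i
  rw [lhs, map_sub, ← hdetM]
  congr 1
  have hnegc : φ ∘ (-u') = -(φ ∘ u') := by funext i; simp
  rw [hnegc, Matrix.mulVec_neg, dotProduct_neg, RingHom.map_dotProduct, hmv]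

lemma dotProduct_sum_mulVec {s : Finset ℕ} (f : ℕ → Matrix (Fin n) (Fin n) ℝ[X])
    (u v : Fin n → ℝ[X]) :
    u ⬝ᵥ (∑ j ∈ s, f j) *ᵥ v = ∑ j ∈ s, u ⬝ᵥ (f j) *ᵥ v := by
  classical
  induction s using Finset.induction with
  | empty => simp
  | insert _ _ h ih =>
    rw [Finset.sum_insert h, Finset.sum_insert h, Matrix.add_mulVec, dotProduct_add, ih]

lemma sigmaMat_add_vecMulVec (B : Matrix (Fin n) (Fin n) ℝ) (u : Fin n → ℝ)
    (k : ℕ) (hk1 : 1 ≤ k) (hkn : k ≤ n) :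
    sigmaMat (B + vecMulVec u u) k = sigmaMat B k + u ⬝ᵥ (newtonT B (k - 1)) *ᵥ u := by
  have hq : (fun i => C (u i)) ⬝ᵥ (NNmat B) *ᵥ (fun i => C (u i))
      = ∑ j ∈ range n, C ((-1 : ℝ) ^ j * (u ⬝ᵥ (newtonT B j) *ᵥ u)) * X ^ (n - 1 - j) := by
    rw [NNmat, dotProduct_sum_mulVec]
    refine Finset.sum_congr rfl fun j _ => ?_
    rw [Matrix.smul_mulVec, dotProduct_smul]
    have hdc : (fun i => C (u i)) ⬝ᵥ ((newtonT B j).map C *ᵥ fun i => C (u i))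
        = C (u ⬝ᵥ (newtonT B j) *ᵥ u) := by
      rw [RingHom.map_dotProduct]
      congr 1
      funext i
      exact (RingHom.map_mulVec C (newtonT B j) u i).symm
    rw [hdc, smul_eq_mul, _root_.map_mul, map_pow, map_neg, Polynomial.C_1]
    ring
  obtain ⟨m, rfl⟩ : ∃ m, k = m + 1 := ⟨k - 1, by omega⟩
  have hco := congrArg (fun p => p.coeff (n - (m + 1))) (charpoly_add_vecMulVec B u)
  simp only [Polynomial.coeff_sub, hq, Polynomial.finset_sum_coeff,
    Polynomial.coeff_C_mul_X_pow] at hco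
  have hsum : ∑ j ∈ range n, (if n - (m + 1) = n - 1 - j then
        ((-1 : ℝ) ^ j * (u ⬝ᵥ (newtonT B j) *ᵥ u)) else 0)
      = (-1 : ℝ) ^ m * (u ⬝ᵥ (newtonT B m) *ᵥ u) := by
    rw [Finset.sum_eq_single_of_mem m (Finset.mem_range.mpr (by omega))]
    · rw [if_pos (by omega)]
    · intro j hj hne
      rw [if_neg]
      have := Finset.mem_range.mp hj
      omega
  rw [hsum] at hco
  rw [sigmaMat, hco, sigmaMat]
  simp only [Nat.add_sub_cancel]
  have he : (-1 : ℝ) ^ m * (-1 : ℝ) ^ m = 1 := by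
    rw [← pow_add]; exact Even.neg_one_pow ⟨m, rfl⟩
  rw [pow_succ]
  linear_combination (u ⬝ᵥ (newtonT B m) *ᵥ u) * he

lemma vecMulVec_mulVec' (u v w : Fin n → ℝ) : vecMulVec u v *ᵥ w = (v ⬝ᵥ w) • u := by
  ext i
  simp only [Matrix.mulVec, Matrix.vecMulVec_apply, Pi.smul_apply, dotProduct, smul_eq_mul,
    Finset.sum_mul]
  exact Finset.sum_congr rfl fun j _ => by ring

lemma newtonT_mulVec (A : Matrix (Fin n) (Fin n) ℝ) (X : Fin n → ℝ) :
    ∀ k, k ≤ n → newtonT (A - vecMulVec X X) k *ᵥ X = newtonT A k *ᵥ X := by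
  intro k
  induction k with
  | zero => intro _; rw [newtonT_zero, newtonT_zero]
  | succ k ih =>
    intro hk
    have hk' : k ≤ n := by omega
    set B := A - vecMulVec X X with hB
    have hBA : B + vecMulVec X X = A := by rw [hB]; abel
    have hsig : sigmaMat A (k + 1) = sigmaMat B (k + 1) + X ⬝ᵥ newtonT B k *ᵥ X := by
      have := sigmaMat_add_vecMulVec B X (k + 1) (by omega) hk
      simpa [hBA] using this
    have hdot : X ⬝ᵥ newtonT B k *ᵥ X = X ⬝ᵥ newtonT A k *ᵥ X := by rw [ih hk']
    have hBv : ∀ w, B *ᵥ w = A *ᵥ w - (X ⬝ᵥ w) • X := by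
      intro w; rw [hB, Matrix.sub_mulVec, vecMulVec_mulVec']
    rw [newtonT_succ, newtonT_succ]
    simp only [Matrix.sub_mulVec, Matrix.smul_mulVec, Matrix.one_mulVec,
      ← Matrix.mulVec_mulVec]
    rw [ih hk', hBv (newtonT A k *ᵥ X), hsig, hdot, add_smul]
    abel

end Aux

/-- `Xᵀ T_k(A − X⊗X) X = Xᵀ T_k(A) X`. -/
theorem newton_sub_rank_one_quadratic (n k : ℕ) (hn : 1 ≤ n) (hkn : k ≤ n)
    (A : Matrix (Fin n) (Fin n) ℝ) (hA : A.IsSymm) (X : Fin n → ℝ) :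
    X ⬝ᵥ (newtonT (A - Matrix.vecMulVec X X) k).mulVec X =
      X ⬝ᵥ (newtonT A k).mulVec X := by
  have h := newtonT_mulVec A X k hkn
  rw [show (newtonT (A - Matrix.vecMulVec X X) k).mulVec X = (newtonT A k).mulVec X from h]
end
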